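/- Let H be the unital associative ℚ(q)-algebra generated by elements p⁺_m, p⁻_m for m ≥ 1 subject to the relations p⁺_m p⁺_n = p⁺_n p⁺_m, p⁻_m p⁻_n = p⁻_n p⁻_m, and p⁻_m p⁺_n = p⁺_n p⁻_m + δ_{mn} [nχ] n/[n], for a fixed nonnegative integer χ. Set h⁺_n and h⁻_n via Σ h^±_n t^n = exp(Σ_{r≥1} p^±_r t^r/r) in H[[t]]. Then for all m, n ≥ 0: h⁻_n h⁺_m = Σ_{r=0}^{min(m,n)} c_r h⁺_{m-r} h⁻_{n-r}, where Σ_{r≥0} c_r u^r = Π_{g=0}^{χ-1} (1 - q^{χ-(2g+1)} u)^{-1}, i.e., c_r = qdim(S^r(V)) for any graded vector space V with qdim(V) = [χ]. -/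

import Mathlib

/-- The quantum integer `[n] = q^{-n+1} + q^{-n+3} + ⋯ + q^{n-1}` in `ℚ(q)`. -/
noncomputable def qIntF (n : ℕ) : RatFunc ℚ :=
  ∑ g ∈ Finset.range n, RatFunc.X ^ ((n : ℤ) - (2 * g + 1))

/-- The formal exponential `exp f = Σ_{n≥0} f^n / n!` of a formal power series
over a (possibly noncommutative) ℚ-algebra, computed coefficientwise; it is
meaningful when the constant coefficient of `f` is zero. -/
noncomputable def expH {H : Type*} [Ring H] [Algebra ℚ H] (f : PowerSeries H) :
    PowerSeries H :=
  PowerSeries.mk fun d => ∑ n ∈ Finset.range (d + 1),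
    ((Nat.factorial n : ℚ)⁻¹) • PowerSeries.coeff (R := H) d (f ^ n)

namespace HeisenAux

open PowerSeries Finset

section TriSum

lemma tri_sum {M : Type*} [AddCommMonoid M] (n : ℕ) (T : ℕ → ℕ → M) :
    ∑ k ∈ range (n+1), ∑ l ∈ range (n-k+1), T k l
      = ∑ s ∈ range (n+1), ∑ k ∈ range (s+1), T k (s-k) := by
  rw [Finset.sum_sigma', Finset.sum_sigma']
  refine Finset.sum_nbij' (i := fun p => ⟨p.1 + p.2, p.1⟩)
    (j := fun q => ⟨q.2, q.1 - q.2⟩) ?_ ?_ ?_ ?_ ?_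
  · rintro ⟨k, l⟩ h
    simp only [Finset.mem_sigma, mem_range] at h ⊢
    omega
  · rintro ⟨s, k⟩ h
    simp only [Finset.mem_sigma, mem_range] at h ⊢
    omega
  · rintro ⟨k, l⟩ h
    simp only [Finset.mem_sigma, mem_range] at h
    show (⟨k, k + l - k⟩ : (_ : ℕ) × ℕ) = ⟨k, l⟩
    congr 1
    omega
  · rintro ⟨s, k⟩ h
    simp only [Finset.mem_sigma, mem_range] at h
    show (⟨k + (s - k), k⟩ : (_ : ℕ) × ℕ) = ⟨s, k⟩
    congr 1
    omega
  · rintro ⟨k, l⟩ h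
    simp only [Finset.mem_sigma, mem_range] at h
    simp only [Nat.add_sub_cancel_left]

lemma tri_comm {M : Type*} [AddCommMonoid M] (n : ℕ) (T : ℕ → ℕ → M) :
    ∑ k ∈ range (n+1), ∑ l ∈ range (n-k+1), T k l
      = ∑ l ∈ range (n+1), ∑ k ∈ range (n-l+1), T k l := by
  rw [tri_sum, tri_sum n (fun l k => T k l)]
  refine Finset.sum_congr rfl fun s hs => ?_
  rw [← Finset.sum_range_reflect]
  refine Finset.sum_congr rfl fun k hk => ?_
  simp only [mem_range] at hk
  congr 1 <;> omega

end TriSum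

section ExpLemmas

variable {A : Type*} [Ring A] [Algebra ℚ A]

lemma coeff_pow_succ (f : ℕ → A) (j n : ℕ) :
    coeff (R := A) n ((mk f) ^ (j+1)) = ∑ k ∈ range (n+1), f k * coeff (R := A) (n-k) ((mk f) ^ j) := by
  rw [pow_succ', coeff_mul, Finset.Nat.sum_antidiagonal_eq_sum_range_succ_mk]
  simp [coeff_mk]

lemma coeff_pow_eq_zero (f : ℕ → A) (hf0 : f 0 = 0) :
    ∀ j d, d < j → coeff (R := A) d ((mk f) ^ j) = 0 := by
  intro j
  induction j with
  | zero => intro d h; omega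
  | succ j ih =>
    intro d h
    rw [coeff_pow_succ]
    apply Finset.sum_eq_zero
    intro i hi
    rw [mem_range] at hi
    rcases Nat.eq_zero_or_pos i with h0 | h0
    · rw [h0, hf0, zero_mul]
    · rw [ih (d - i) (by omega), mul_zero]

lemma coeff_expH (f : ℕ → A) (d : ℕ) :
    coeff (R := A) d (expH (mk f)) = ∑ j ∈ range (d+1),
      ((Nat.factorial j : ℚ)⁻¹) • coeff (R := A) d ((mk f)^j) := by
  simp [expH, coeff_mk]

lemma coeff_expH_ext (f : ℕ → A) (hf0 : f 0 = 0) (d N : ℕ) (h : d < N) :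
    coeff (R := A) d (expH (mk f)) = ∑ j ∈ range N,
      ((Nat.factorial j : ℚ)⁻¹) • coeff (R := A) d ((mk f)^j) := by
  rw [coeff_expH]
  apply Finset.sum_subset (Finset.range_subset_range.2 h)
  intro j hjN hj
  rw [mem_range, not_lt] at hj
  rw [coeff_pow_eq_zero f hf0 j d (by omega), smul_zero]

lemma newton_aux (f : ℕ → A) (hcomm : ∀ i j, Commute (f i) (f j)) :
    ∀ (j n : ℕ), (n : ℚ) • coeff (R := A) n ((mk f) ^ (j+1))
      = ((j : ℚ) + 1) • ∑ k ∈ range (n+1), (k : ℚ) • (f k * coeff (R := A) (n-k) ((mk f) ^ j)) := by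
  intro j
  induction j with
  | zero =>
    intro n
    have h1 : ∀ k ∈ range (n+1), (k:ℚ) • (f k * coeff (R := A) (n-k) ((mk f)^0))
        = if k = n then (n:ℚ) • f n else 0 := by
      intro k hk
      rw [mem_range] at hk
      rcases eq_or_ne k n with rfl | h
      · simp [pow_zero, PowerSeries.coeff_one]
      · have h2 : n - k ≠ 0 := by omega
        simp [pow_zero, PowerSeries.coeff_one, h2, h]
    rw [Finset.sum_congr rfl h1, Finset.sum_ite_eq' (range (n+1)) n,
      if_pos (self_mem_range_succ n), pow_one, coeff_mk]
    norm_num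
  | succ j ih =>
    intro n
    rw [coeff_pow_succ, smul_sum]
    have split : ∀ k ∈ range (n+1),
        (n:ℚ) • (f k * coeff (R := A) (n-k) ((mk f)^(j+1)))
          = (k:ℚ) • (f k * coeff (R := A) (n-k) ((mk f)^(j+1)))
            + f k * (((n-k : ℕ):ℚ) • coeff (R := A) (n-k) ((mk f)^(j+1))) := by
      intro k hk
      rw [mem_range] at hk
      rw [mul_smul_comm, ← add_smul]
      congr 1
      have : ((n - k : ℕ) : ℚ) = (n : ℚ) - (k : ℚ) := by
        rw [Nat.cast_sub (by omega)]
      rw [this]; ring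
    rw [Finset.sum_congr rfl split, Finset.sum_add_distrib]
    have second : ∑ k ∈ range (n+1), f k * (((n-k : ℕ):ℚ) • coeff (R := A) (n-k) ((mk f)^(j+1)))
        = ((j:ℚ)+1) • ∑ k ∈ range (n+1), (k:ℚ) • (f k * coeff (R := A) (n-k) ((mk f)^(j+1))) := by
      have e1 : ∀ k ∈ range (n+1), f k * (((n-k : ℕ):ℚ) • coeff (R := A) (n-k) ((mk f)^(j+1)))
          = ((j:ℚ)+1) • ∑ l ∈ range (n-k+1), (l:ℚ) • (f k * (f l * coeff (R := A) (n-k-l) ((mk f)^j))) := by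
        intro k hk
        rw [ih (n-k), mul_smul_comm, Finset.mul_sum]
        congr 1
        refine Finset.sum_congr rfl fun l hl => ?_
        rw [mul_smul_comm]
      rw [Finset.sum_congr rfl e1, ← Finset.smul_sum]
      congr 1
      rw [tri_comm n (fun k l => (l:ℚ) • (f k * (f l * coeff (R := A) (n-k-l) ((mk f)^j))))]
      refine Finset.sum_congr rfl fun l hl => ?_
      have e2 : ∀ k ∈ range (n-l+1), (l:ℚ) • (f k * (f l * coeff (R := A) (n-k-l) ((mk f)^j)))
          = (l:ℚ) • (f l * (f k * coeff (R := A) ((n-l)-k) ((mk f)^j))) := by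
        intro k hk
        have hnn : n - k - l = n - l - k := by omega
        rw [hnn, ← mul_assoc, (hcomm k l).eq, mul_assoc]
      rw [Finset.sum_congr rfl e2, ← Finset.smul_sum, ← Finset.mul_sum, ← coeff_pow_succ]
    rw [second, ← one_smul ℚ (∑ k ∈ range (n+1), (k:ℚ) • (f k * coeff (R := A) (n-k) ((mk f)^(j+1)))),
      smul_smul, ← add_smul]
    norm_num
    rw [add_comm]

lemma fact_succ_inv (j : ℕ) :
    ((Nat.factorial (j+1) : ℚ))⁻¹ * ((j:ℚ)+1) = ((Nat.factorial j : ℚ))⁻¹ := by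
  rw [Nat.factorial_succ]
  push_cast
  have h1 : ((j:ℚ)+1) ≠ 0 := by positivity
  have h2 : ((Nat.factorial j : ℚ)) ≠ 0 := by
    exact_mod_cast Nat.cast_ne_zero.mpr (Nat.factorial_ne_zero j)
  field_simp

lemma newton (f : ℕ → A) (hf0 : f 0 = 0) (hcomm : ∀ i j, Commute (f i) (f j)) (n : ℕ) :
    (n:ℚ) • coeff (R := A) n (expH (mk f))
      = ∑ k ∈ range (n+1), (k:ℚ) • (f k * coeff (R := A) (n-k) (expH (mk f))) := by
  rcases Nat.eq_zero_or_pos n with rfl | hn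
  · simp
  have step1 : (n:ℚ) • coeff (R := A) n (expH (mk f))
      = ∑ j ∈ range (n+2), ((Nat.factorial j : ℚ))⁻¹ • ((n:ℚ) • coeff (R := A) n ((mk f)^j)) := by
    rw [coeff_expH_ext f hf0 n (n+2) (by omega), Finset.smul_sum]
    exact Finset.sum_congr rfl fun j _ => smul_comm _ _ _
  rw [step1, Finset.sum_range_succ']
  have h0 : ((Nat.factorial 0 : ℚ))⁻¹ • ((n:ℚ) • coeff (R := A) n ((mk f)^0)) = 0 := by
    rw [pow_zero, PowerSeries.coeff_one]
    have : n ≠ 0 := by omega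
    simp [this]
  rw [h0, add_zero]
  have step2 : ∀ j ∈ range (n+1),
      ((Nat.factorial (j+1) : ℚ))⁻¹ • ((n:ℚ) • coeff (R := A) n ((mk f)^(j+1)))
        = ∑ k ∈ range (n+1), ((Nat.factorial j : ℚ))⁻¹ • ((k:ℚ) • (f k * coeff (R := A) (n-k) ((mk f)^j))) := by
    intro j _
    rw [newton_aux f hcomm j n, smul_smul, fact_succ_inv, ← Finset.smul_sum]
  rw [Finset.sum_congr rfl step2, Finset.sum_comm]
  refine Finset.sum_congr rfl fun k hk => ?_
  rw [coeff_expH_ext f hf0 (n-k) (n+1) (by omega), Finset.mul_sum, Finset.smul_sum]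
  refine Finset.sum_congr rfl fun j hj => ?_
  rw [mul_smul_comm, smul_comm]

lemma comm_aux (f : ℕ → A) (x z : A) (k : ℕ) (hk : 1 ≤ k)
    (hz : ∀ y, z * y = y * z)
    (hx : ∀ r, x * f r = f r * x + (if r = k then z else 0)) :
    ∀ (j m : ℕ), x * coeff (R := A) m ((mk f)^(j+1))
      = coeff (R := A) m ((mk f)^(j+1)) * x
        + ((j:ℚ)+1) • (if k ≤ m then z * coeff (R := A) (m-k) ((mk f)^j) else 0) := by
  intro j
  induction j with
  | zero =>
    intro m
    have key : (if m = k then z else 0)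
        = (if k ≤ m then z * coeff (R := A) (m-k) ((mk f)^0) else 0) := by
      rw [pow_zero, PowerSeries.coeff_one]
      rcases eq_or_ne m k with rfl | h
      · simp
      · rcases le_or_gt k m with hle | hlt
        · have h2 : m - k ≠ 0 := by omega
          simp [h2, h, hle]
        · simp [h, not_le.mpr hlt]
    rw [pow_one, coeff_mk, hx m, key]
    norm_num
  | succ j ih =>
    intro m
    rw [coeff_pow_succ f (j+1) m, Finset.mul_sum]
    have expand : ∀ i ∈ range (m+1),
        x * (f i * coeff (R := A) (m-i) ((mk f)^(j+1)))
          = (f i * coeff (R := A) (m-i) ((mk f)^(j+1))) * x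
            + ((j:ℚ)+1) • (f i * (if k ≤ m-i then z * coeff (R := A) (m-i-k) ((mk f)^j) else 0))
            + (if i = k then z * coeff (R := A) (m-i) ((mk f)^(j+1)) else 0) := by
      intro i _
      rw [← mul_assoc, hx i, add_mul, mul_assoc, ih (m-i), mul_add, mul_smul_comm,
        ← mul_assoc, ite_mul, zero_mul]
    rw [Finset.sum_congr rfl expand, Finset.sum_add_distrib, Finset.sum_add_distrib,
      ← Finset.sum_mul, ← coeff_pow_succ]
    have sum3 : ∑ i ∈ range (m+1), (if i = k then z * coeff (R := A) (m-i) ((mk f)^(j+1)) else 0)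
        = if k ≤ m then z * coeff (R := A) (m-k) ((mk f)^(j+1)) else 0 := by
      rw [Finset.sum_ite_eq' (range (m+1)) k (fun i => z * coeff (R := A) (m-i) ((mk f)^(j+1)))]
      simp [Nat.lt_succ_iff]
    have sum2 : ∑ i ∈ range (m+1), f i * (if k ≤ m-i then z * coeff (R := A) (m-i-k) ((mk f)^j) else 0)
        = if k ≤ m then z * coeff (R := A) (m-k) ((mk f)^(j+1)) else 0 := by
      rcases le_or_gt k m with hle | hlt
      · rw [if_pos hle]
        have veq : ∀ i ∈ range (m+1),
            f i * (if k ≤ m-i then z * coeff (R := A) (m-i-k) ((mk f)^j) else 0)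
              = if i ∈ range (m-k+1) then z * (f i * coeff (R := A) ((m-k)-i) ((mk f)^j)) else 0 := by
          intro i hi
          rw [mem_range] at hi
          by_cases hik : i ≤ m - k
          · have h1 : k ≤ m - i := by omega
            have h2 : m - i - k = (m - k) - i := by omega
            rw [if_pos h1, if_pos (mem_range.mpr (by omega)), h2, ← mul_assoc, ← hz (f i),
              mul_assoc]
          · have h1 : ¬ k ≤ m - i := by omega
            rw [if_neg h1, mul_zero, if_neg (by rw [mem_range]; omega)]
        rw [Finset.sum_congr rfl veq, Finset.sum_ite_mem,
          Finset.inter_eq_right.mpr (Finset.range_subset_range.mpr (by omega)),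
          ← Finset.mul_sum, ← coeff_pow_succ]
      · rw [if_neg (not_le.mpr hlt)]
        apply Finset.sum_eq_zero
        intro i hi
        rw [mem_range] at hi
        rw [if_neg (by omega), mul_zero]
    rw [← Finset.smul_sum, sum2, sum3, add_assoc]
    congr 1
    rw [show ((j+1:ℕ):ℚ) + 1 = ((j:ℚ)+1) + 1 by push_cast; ring,
      add_smul ((j:ℚ)+1) 1, one_smul]

lemma comm_exp (f : ℕ → A) (hf0 : f 0 = 0) (x z : A) (k : ℕ) (hk : 1 ≤ k)
    (hz : ∀ y, z * y = y * z)
    (hx : ∀ r, x * f r = f r * x + (if r = k then z else 0)) (m : ℕ) :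
    x * coeff (R := A) m (expH (mk f))
      = coeff (R := A) m (expH (mk f)) * x
        + (if k ≤ m then z * coeff (R := A) (m-k) (expH (mk f)) else 0) := by
  rw [coeff_expH_ext f hf0 m (m+2) (by omega)]
  rw [Finset.mul_sum]
  have expand : ∀ j ∈ range (m+2),
      x * (((Nat.factorial j : ℚ))⁻¹ • coeff (R := A) m ((mk f)^j))
        = ((Nat.factorial j : ℚ))⁻¹ • (x * coeff (R := A) m ((mk f)^j)) := by
    intro j _
    rw [mul_smul_comm]
  rw [Finset.sum_congr rfl expand, Finset.sum_range_succ']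
  have h0 : ((Nat.factorial 0 : ℚ))⁻¹ • (x * coeff (R := A) m ((mk f)^0)) =
      ((Nat.factorial 0 : ℚ))⁻¹ • (coeff (R := A) m ((mk f)^0) * x) := by
    rw [pow_zero, PowerSeries.coeff_one]
    by_cases hm : m = 0 <;> simp [hm]
  rw [h0]
  have expand2 : ∀ j ∈ range (m+1),
      ((Nat.factorial (j+1) : ℚ))⁻¹ • (x * coeff (R := A) m ((mk f)^(j+1)))
        = ((Nat.factorial (j+1) : ℚ))⁻¹ • (coeff (R := A) m ((mk f)^(j+1)) * x)
          + ((Nat.factorial j : ℚ))⁻¹ • (if k ≤ m then z * coeff (R := A) (m-k) ((mk f)^j) else 0) := by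
    intro j _
    rw [comm_aux f x z k hk hz hx j m, smul_add, smul_smul, fact_succ_inv]
  rw [Finset.sum_congr rfl expand2, Finset.sum_add_distrib, add_assoc, add_comm
    (∑ j ∈ range (m+1), ((Nat.factorial j : ℚ))⁻¹ • (if k ≤ m then z * coeff (R := A) (m-k) ((mk f)^j) else 0)),
    ← add_assoc]
  have hsum : ∑ j ∈ range (m+1), ((Nat.factorial (j+1):ℚ))⁻¹ • (coeff (R := A) m ((mk f)^(j+1)) * x)
      + ((Nat.factorial 0:ℚ))⁻¹ • (coeff (R := A) m ((mk f)^0) * x)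
      = ∑ j ∈ range (m+2), ((Nat.factorial j:ℚ))⁻¹ • (coeff (R := A) m ((mk f)^j) * x) :=
    (Finset.sum_range_succ' (fun j => ((Nat.factorial j:ℚ))⁻¹ • (coeff (R := A) m ((mk f)^j) * x)) (m+1)).symm
  rw [hsum]
  congr 1
  · rw [Finset.sum_mul]
    exact Finset.sum_congr rfl fun j _ => (smul_mul_assoc _ _ _).symm
  · rcases le_or_gt k m with hle | hlt
    · simp only [if_pos hle]
      rw [coeff_expH_ext f hf0 (m-k) (m+1) (by omega), Finset.mul_sum]
      exact Finset.sum_congr rfl fun j _ => (mul_smul_comm _ _ _).symm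
    · simp [not_le.mpr hlt]

lemma exp_zero_coeff (f : ℕ → A) : coeff (R := A) 0 (expH (mk f)) = 1 := by
  rw [coeff_expH]
  simp

end ExpLemmas

section RatFuncLemmas

lemma zpow_nat_aux (z : ℤ) : ∀ (k : ℕ), ((RatFunc.X : RatFunc ℚ) ^ z) ^ k = RatFunc.X ^ (z * k) := by
  intro k
  induction k with
  | zero => simp
  | succ k ih =>
    rw [pow_succ, ih, ← zpow_add₀ (RatFunc.X_ne_zero (K := ℚ))]
    congr 1
    push_cast
    ring

lemma qIntF_ne_zero {k : ℕ} (hk : 1 ≤ k) : qIntF k ≠ 0 := by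
  intro h
  have key : (RatFunc.X : RatFunc ℚ) ^ ((k:ℤ) - 1) * qIntF k
      = algebraMap (Polynomial ℚ) (RatFunc ℚ) (∑ g ∈ range k, Polynomial.X ^ (2*g)) := by
    rw [qIntF, Finset.mul_sum, map_sum,
      ← Finset.sum_range_reflect (fun g => algebraMap (Polynomial ℚ) (RatFunc ℚ) (Polynomial.X ^ (2*g))) k]
    refine Finset.sum_congr rfl fun g hg => ?_
    rw [mem_range] at hg
    rw [← zpow_add₀ (RatFunc.X_ne_zero (K := ℚ))]
    have h1 : (k:ℤ) - 1 + ((k:ℤ) - (2*g+1)) = ((2*(k-1-g) : ℕ) : ℤ) := by push_cast; omega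
    rw [h1, zpow_natCast, map_pow, RatFunc.algebraMap_X]
  have hp : (∑ g ∈ range k, (Polynomial.X : Polynomial ℚ) ^ (2*g)) ≠ 0 := by
    intro h0
    have hc : (∑ g ∈ range k, (Polynomial.X : Polynomial ℚ) ^ (2*g)).coeff 0 = 1 := by
      rw [Polynomial.finset_sum_coeff]
      rw [Finset.sum_eq_single_of_mem 0 (mem_range.mpr (by omega))]
      · simp
      · intro g _ hg
        rw [Polynomial.coeff_X_pow]
        simp [hg]
    rw [h0] at hc
    simp at hc
  exact RatFunc.algebraMap_ne_zero hp (by rw [← key, h, mul_zero])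

lemma qIntF_mul (χ : ℕ) {k : ℕ} (hk : 1 ≤ k) :
    qIntF (k * χ) = qIntF k *
      ∑ g ∈ range χ, ((RatFunc.X : RatFunc ℚ) ^ ((χ:ℤ) - (2*g+1)))^k := by
  rw [qIntF, qIntF, Finset.sum_mul_sum, ← Finset.sum_product']
  refine Finset.sum_nbij' (i := fun i => (i % k, i / k)) (j := fun p => p.1 + k * p.2)
    ?_ ?_ ?_ ?_ ?_
  · intro i hi
    rw [mem_range] at hi
    rw [Finset.mem_product, mem_range, mem_range]
    exact ⟨Nat.mod_lt _ hk, Nat.div_lt_of_lt_mul hi⟩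
  · rintro ⟨j, g⟩ hp
    rw [Finset.mem_product, mem_range, mem_range] at hp
    rw [mem_range]
    calc j + k * g < k + k * g := by omega
    _ = k * (g + 1) := by ring
    _ ≤ k * χ := Nat.mul_le_mul_left k hp.2
  · intro i hi
    exact Nat.mod_add_div i k
  · rintro ⟨j, g⟩ hp
    rw [Finset.mem_product, mem_range, mem_range] at hp
    have e1 : (j + k * g) % k = j := by
      rw [Nat.add_mul_mod_self_left, Nat.mod_eq_of_lt hp.1]
    have e2 : (j + k * g) / k = g := by
      rw [Nat.add_mul_div_left _ _ (by omega), Nat.div_eq_of_lt hp.1, zero_add]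
    show ((j + k * g) % k, (j + k * g) / k) = (j, g)
    rw [e1, e2]
  · intro i hi
    beta_reduce
    rw [zpow_nat_aux, ← zpow_add₀ (RatFunc.X_ne_zero (K := ℚ))]
    congr 1
    obtain ⟨a, b, ha, hb⟩ : ∃ a b : ℕ, i % k = a ∧ i / k = b := ⟨_, _, rfl, rfl⟩
    rw [ha, hb]
    have hi2 : a + k * b = i := by rw [← ha, ← hb]; exact Nat.mod_add_div i k
    rw [← hi2]
    push_cast
    ring

lemma geom {R : Type*} [CommRing R] (a : R) :
    (mk fun n => a ^ n) * (1 - C (R := R) a * X) = 1 := by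
  ext n
  rw [mul_sub, mul_one, map_sub, ← mul_assoc]
  cases n with
  | zero =>
    rw [coeff_zero_mul_X]
    simp [coeff_mk]
  | succ n =>
    rw [coeff_succ_mul_X, coeff_mul_C, coeff_mk, coeff_mk, PowerSeries.coeff_one]
    simp [pow_succ]

lemma derivProd {R : Type*} [CommRing R] (α : ℕ → R) (s : Finset ℕ) :
    (∑ g ∈ s, C (R := R) (α g) * mk fun n => (α g)^n) * (∏ g ∈ s, (1 - C (R := R) (α g) * X))
      = - (d⁄dX R (∏ g ∈ s, (1 - C (R := R) (α g) * X))) := by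
  induction s using Finset.induction_on with
  | empty => simp
  | insert _ _ ha =>
    rename_i a s ih
    rw [Finset.sum_insert ha, Finset.prod_insert ha,
      Derivation.leibniz, smul_eq_mul, smul_eq_mul]
    have hda : d⁄dX R (1 - C (R := R) (α a) * X) = - C (R := R) (α a) := by
      rw [map_sub, Derivation.map_one_eq_zero, Derivation.leibniz, derivative_X,
        derivative_C, smul_eq_mul, smul_eq_mul, mul_one, mul_zero, add_zero, zero_sub]
    have hSa : (C (R := R) (α a) * mk fun n => (α a)^n) * (1 - C (R := R) (α a) * X) = C (R := R) (α a) := by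
      rw [mul_assoc, geom (α a), mul_one]
    rw [hda]
    linear_combination (∏ g ∈ s, (1 - C (R := R) (α g) * X)) * hSa
      + (1 - C (R := R) (α a) * X) * ih

lemma c_zero (χ : ℕ) (α : ℕ → RatFunc ℚ) (c : ℕ → RatFunc ℚ)
    (hc : PowerSeries.mk c * ∏ g ∈ Finset.range χ,
      (1 - PowerSeries.C (R := (RatFunc ℚ)) (α g) * PowerSeries.X) = 1) : c 0 = 1 := by
  have h := congrArg (constantCoeff (R := RatFunc ℚ)) hc
  rw [map_mul, map_prod] at h
  have h2 : ∀ g ∈ range χ, constantCoeff (R := RatFunc ℚ)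
      (1 - PowerSeries.C (R := (RatFunc ℚ)) (α g) * PowerSeries.X) = 1 := by
    intro g _
    simp
  rw [Finset.prod_congr rfl h2, Finset.prod_const_one, mul_one, map_one] at h
  exact h

lemma deriv_c (χ : ℕ) (α : ℕ → RatFunc ℚ) (c : ℕ → RatFunc ℚ)
    (hc : PowerSeries.mk c * ∏ g ∈ Finset.range χ,
      (1 - PowerSeries.C (R := (RatFunc ℚ)) (α g) * PowerSeries.X) = 1) :
    d⁄dX (RatFunc ℚ) (mk c)
      = mk c * (∑ g ∈ range χ, C (R := (RatFunc ℚ)) (α g) * mk fun n => (α g)^n) := by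
  have hd := congrArg (d⁄dX (RatFunc ℚ)) hc
  rw [Derivation.leibniz, Derivation.map_one_eq_zero, smul_eq_mul, smul_eq_mul] at hd
  have hP := derivProd α (range χ)
  linear_combination (mk c) * hd - (mk c * mk c) * hP
    - (d⁄dX (RatFunc ℚ) (mk c)
        - mk c * (∑ g ∈ range χ, C (R := (RatFunc ℚ)) (α g) * mk fun n => (α g)^n)) * hc

lemma crec (χ : ℕ) (α : ℕ → RatFunc ℚ) (c : ℕ → RatFunc ℚ)
    (hc : PowerSeries.mk c * ∏ g ∈ Finset.range χ,
      (1 - PowerSeries.C (R := (RatFunc ℚ)) (α g) * PowerSeries.X) = 1) (s : ℕ) :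
    (s : RatFunc ℚ) * c s
      = ∑ k ∈ range (s+1), (if k = 0 then 0
          else (∑ g ∈ range χ, (α g)^k) * c (s-k)) := by
  cases s with
  | zero => simp
  | succ s =>
    have hS : ∀ j : ℕ, coeff (R := (RatFunc ℚ)) j
        (∑ g ∈ range χ, C (R := (RatFunc ℚ)) (α g) * mk fun n => (α g)^n)
          = ∑ g ∈ range χ, (α g)^(j+1) := by
      intro j
      rw [map_sum]
      refine Finset.sum_congr rfl fun g _ => ?_
      rw [coeff_C_mul, coeff_mk, ← pow_succ']
    have h := congrArg (fun f => coeff (R := (RatFunc ℚ)) s f) (deriv_c χ α c hc)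
    simp only [coeff_derivative, coeff_mul] at h
    rw [Finset.Nat.sum_antidiagonal_eq_sum_range_succ
      (fun a b => coeff (R := (RatFunc ℚ)) a (mk c)
        * coeff (R := (RatFunc ℚ)) b (∑ g ∈ range χ, C (R := (RatFunc ℚ)) (α g) * mk fun n => (α g)^n))] at h
    have h2 : ∀ k ∈ range (s+1), coeff (R := (RatFunc ℚ)) k (mk c)
        * coeff (R := (RatFunc ℚ)) (s-k) (∑ g ∈ range χ, C (R := (RatFunc ℚ)) (α g) * mk fun n => (α g)^n)
          = c k * (∑ g ∈ range χ, (α g)^((s-k)+1)) := by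
      intro k _
      rw [coeff_mk, hS]
    rw [Finset.sum_congr rfl h2, coeff_mk] at h
    rw [Finset.sum_range_succ']
    have e0 : (if (0:ℕ) = 0 then (0 : RatFunc ℚ)
        else (∑ g ∈ range χ, (α g)^(0:ℕ)) * c (s+1-0)) = 0 := by simp
    rw [e0, add_zero]
    have e1 : ∀ i ∈ range (s+1), (if i+1 = 0 then (0 : RatFunc ℚ)
        else (∑ g ∈ range χ, (α g)^(i+1)) * c (s+1-(i+1)))
          = (∑ g ∈ range χ, (α g)^(i+1)) * c (s-i) := by
      intro i _
      rw [if_neg (by omega)]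
      congr 2
      omega
    rw [Finset.sum_congr rfl e1]
    have hrefl := Finset.sum_range_reflect
      (fun j => c j * (∑ g ∈ range χ, (α g)^((s-j)+1))) (s+1)
    have h3 : ∀ j ∈ range (s+1),
        c (s+1-1-j) * (∑ g ∈ range χ, (α g)^((s-(s+1-1-j))+1))
          = (∑ g ∈ range χ, (α g)^(j+1)) * c (s-j) := by
      intro j hj
      rw [mem_range] at hj
      have ea : s+1-1-j = s - j := by omega
      have eb : s - (s - j) = j := by omega
      rw [ea, eb, mul_comm]
    rw [Finset.sum_congr rfl h3] at hrefl
    rw [hrefl, ← h]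
    push_cast
    ring

end RatFuncLemmas

section HLemmas

variable {H : Type*} [Ring H] [Algebra ℚ H]

lemma K1 (P h : ℕ → H)
    (hh : PowerSeries.mk h = expH (PowerSeries.mk fun r => ((r : ℚ)⁻¹) • P r))
    (hcomm : ∀ i j, 1 ≤ i → 1 ≤ j → Commute (P i) (P j)) (N : ℕ) :
    (N:ℚ) • h N = ∑ k ∈ range (N+1), (if k = 0 then 0 else P k * h (N-k)) := by
  have hfc : ∀ d, h d = coeff (R := H) d (expH (mk fun r => ((r:ℚ)⁻¹) • P r)) := by
    intro d
    rw [← hh, coeff_mk]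
  have hf0 : ((fun r => ((r:ℚ)⁻¹) • P r) : ℕ → H) 0 = 0 := by
    show ((0:ℕ):ℚ)⁻¹ • P 0 = 0
    norm_num
  have hcomm' : ∀ (i j : ℕ), Commute (((i:ℚ)⁻¹) • P i) (((j:ℚ)⁻¹) • P j) := by
    intro i j
    rcases Nat.eq_zero_or_pos i with rfl | hi
    · have : ((0:ℕ):ℚ)⁻¹ • P 0 = 0 := by norm_num
      rw [this]
      exact Commute.zero_left _
    rcases Nat.eq_zero_or_pos j with rfl | hj
    · have : ((0:ℕ):ℚ)⁻¹ • P 0 = 0 := by norm_num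
      rw [this]
      exact Commute.zero_right _
    exact ((hcomm i j hi hj).smul_left _).smul_right _
  rw [hfc N, newton _ hf0 hcomm' N]
  refine Finset.sum_congr rfl fun k hk => ?_
  rcases Nat.eq_zero_or_pos k with rfl | hk1
  · simp
  · rw [if_neg (by omega), smul_mul_assoc, smul_smul,
      mul_inv_cancel₀ (Nat.cast_ne_zero.mpr (by omega) : ((k:ℕ):ℚ) ≠ 0), one_smul, ← hfc]

lemma K0 (P h : ℕ → H)
    (hh : PowerSeries.mk h = expH (PowerSeries.mk fun r => ((r : ℚ)⁻¹) • P r)) :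
    h 0 = 1 := by
  have hfc : h 0 = coeff (R := H) 0 (expH (mk fun r => ((r:ℚ)⁻¹) • P r)) := by
    rw [← hh, coeff_mk]
  rw [hfc, exp_zero_coeff]

end HLemmas

end HeisenAux

/-- in the quantum Heisenberg algebra `H` (over `ℚ(q)`) with
generators `p⁺_m, p⁻_m` (`m ≥ 1`) satisfying
`p⁻_m p⁺_n = p⁺_n p⁻_m + δ_{mn} [nχ] n/[n]` for a fixed `χ ∈ ℤ_{≥0}`, the
elements `h⁺_n, h⁻_n` defined by `Σ h^±_n t^n = exp(Σ_{r≥1} p^±_r t^r/r)`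
satisfy `h⁻_n h⁺_m = Σ_{r=0}^{min(m,n)} c_r h⁺_{m-r} h⁻_{n-r}`, where
`Σ_r c_r u^r = Π_{g=0}^{χ-1} (1 - q^{χ-(2g+1)} u)^{-1}`
(i.e. `c_r = qdim(S^r V)` for `V` with `qdim(V) = [χ]`). -/
theorem heisenberg_h_h_commutation
    (H : Type*) [Ring H] [Algebra (RatFunc ℚ) H] [Algebra ℚ H]
    [IsScalarTower ℚ (RatFunc ℚ) H]
    (χ : ℕ) (Pp Pm : ℕ → H)
    (hpp : ∀ m n, 1 ≤ m → 1 ≤ n → Commute (Pp m) (Pp n))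
    (hmm : ∀ m n, 1 ≤ m → 1 ≤ n → Commute (Pm m) (Pm n))
    (hrel : ∀ m n, 1 ≤ m → 1 ≤ n →
      Pm m * Pp n = Pp n * Pm m +
        (if m = n then algebraMap (RatFunc ℚ) H (qIntF (n * χ) * n / qIntF n) else 0))
    (hp hm : ℕ → H)
    (hhp : PowerSeries.mk hp = expH (PowerSeries.mk fun r => ((r : ℚ)⁻¹) • Pp r))
    (hhm : PowerSeries.mk hm = expH (PowerSeries.mk fun r => ((r : ℚ)⁻¹) • Pm r))
    (c : ℕ → RatFunc ℚ)
    (hc : PowerSeries.mk c *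
        ∏ g ∈ Finset.range χ,
          (1 - PowerSeries.C (R := (RatFunc ℚ)) (RatFunc.X ^ ((χ : ℤ) - (2 * g + 1))) *
            PowerSeries.X) = 1)
    (m n : ℕ) :
    hm n * hp m =
      ∑ r ∈ Finset.range (min m n + 1),
        algebraMap (RatFunc ℚ) H (c r) * (hp (m - r) * hm (n - r)) := by
  classical
  open HeisenAux Finset PowerSeries in
  -- notation
  set α : ℕ → RatFunc ℚ := fun g => RatFunc.X ^ ((χ : ℤ) - (2 * g + 1)) with hα
  set b : ℕ → RatFunc ℚ := fun k => ∑ g ∈ range χ, (α g) ^ k with hb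
  set A : ℕ → H := fun k => algebraMap (RatFunc ℚ) H (b k) with hA
  set cA : ℕ → H := fun r => algebraMap (RatFunc ℚ) H (c r) with hcA
  -- basic facts
  have hm0 : hm 0 = 1 := K0 Pm hm hhm
  have hc0 : c 0 = 1 := c_zero χ α c hc
  have K1m : ∀ N : ℕ, (N:ℚ) • hm N
      = ∑ k ∈ range (N+1), (if k = 0 then 0 else Pm k * hm (N-k)) :=
    K1 Pm hm hhm hmm
  have hpc : ∀ d, hp d = coeff (R := H) d (expH (mk fun r => ((r:ℚ)⁻¹) • Pp r)) := by
    intro d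
    rw [← hhp, coeff_mk]
  -- commutation of Pm k with hp
  have K2 : ∀ k, 1 ≤ k → ∀ s, Pm k * hp s
      = hp s * Pm k + (if k ≤ s then A k * hp (s-k) else 0) := by
    intro k hk s
    have hf0 : ((fun r => ((r:ℚ)⁻¹) • Pp r) : ℕ → H) 0 = 0 := by
      show ((0:ℕ):ℚ)⁻¹ • Pp 0 = 0
      norm_num
    have hz : ∀ y, A k * y = y * A k := fun y => Algebra.commutes (b k) y
    have hx : ∀ (r : ℕ), Pm k * (((r:ℚ)⁻¹) • Pp r)
        = (((r:ℚ)⁻¹) • Pp r) * Pm k + (if r = k then A k else 0) := by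
      intro r
      rcases Nat.eq_zero_or_pos r with rfl | hr
      · have hz0 : ((0:ℕ):ℚ)⁻¹ • Pp 0 = 0 := by norm_num
        rw [hz0, mul_zero, zero_mul, if_neg (by omega), add_zero]
      · rw [mul_smul_comm, hrel k r hk hr, smul_add, smul_mul_assoc]
        congr 1
        rcases eq_or_ne r k with rfl | hrk
        · rw [if_pos rfl, if_pos rfl]
          have hval : qIntF (r * χ) * r / qIntF r = (r : RatFunc ℚ) * b r := by
            rw [qIntF_mul χ hr]
            have hne := qIntF_ne_zero hr
            field_simp
            ring
          rw [hval, map_mul, map_natCast, ← nsmul_eq_mul, ← Nat.cast_smul_eq_nsmul ℚ,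
            smul_smul, inv_mul_cancel₀ (Nat.cast_ne_zero.mpr (by omega) : ((r:ℕ):ℚ) ≠ 0),
            one_smul]
        · rw [if_neg (Ne.symm hrk), if_neg hrk, smul_zero]
    have := comm_exp (fun r => ((r:ℚ)⁻¹) • Pp r) hf0 (Pm k) (A k) k hk hz hx s
    rw [← hpc, ← hpc] at this
    exact this
  have ccomm : ∀ (r : ℕ) (y : H), cA r * y = y * cA r := fun r y => Algebra.commutes (c r) y
  have K2e : ∀ k, 1 ≤ k → ∀ (mm r : ℕ),
      Pm k * (if r ≤ mm then hp (mm - r) else 0)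
        = (if r ≤ mm then hp (mm - r) else 0) * Pm k
          + A k * (if r + k ≤ mm then hp (mm - (r+k)) else 0) := by
    intro k hk mm r
    by_cases hr : r ≤ mm
    · rw [if_pos hr, K2 k hk (mm - r)]
      congr 1
      by_cases h2 : r + k ≤ mm
      · rw [if_pos (by omega : k ≤ mm - r), if_pos h2]
        congr 2
        omega
      · rw [if_neg (by omega : ¬ k ≤ mm - r), if_neg h2, mul_zero]
    · rw [if_neg hr, if_neg (by omega : ¬ r + k ≤ mm)]
      simp only [mul_zero, zero_mul, zero_add]
  have bcrec : ∀ s : ℕ, ∑ k ∈ range (s+1), (if k = 0 then (0:RatFunc ℚ) else b k * c (s-k))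
      = (s : RatFunc ℚ) * c s := by
    intro s
    simp only [hb]
    exact (crec χ α c hc s).symm
  have natsmul : ∀ (s : ℕ) (u : RatFunc ℚ) (v : H),
      algebraMap (RatFunc ℚ) H ((s : RatFunc ℚ) * u) * v
        = (s:ℚ) • (algebraMap (RatFunc ℚ) H u * v) := by
    intro s u v
    rw [map_mul, map_natCast, mul_assoc, ← nsmul_eq_mul, ← Nat.cast_smul_eq_nsmul ℚ]
  -- the main claim, proven by strong induction
  have main : ∀ N M : ℕ, hm N * hp M
      = ∑ r ∈ range (N+1), cA r * ((if r ≤ M then hp (M - r) else 0) * hm (N - r)) := by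
    intro N
    induction N using Nat.strong_induction_on with
    | _ N IH =>
      intro M
      rcases Nat.eq_zero_or_pos N with rfl | hN
      · rw [hm0, one_mul, Finset.sum_range_one, if_pos (Nat.zero_le M), Nat.sub_zero,
          Nat.sub_zero, hm0, mul_one]
        show hp M = algebraMap (RatFunc ℚ) H (c 0) * hp M
        rw [hc0, map_one, one_mul]
      · have hNz : ((N:ℕ):ℚ) ≠ 0 := Nat.cast_ne_zero.mpr (by omega)
        have key : (N:ℚ) • (hm N * hp M)
            = (N:ℚ) • (∑ r ∈ range (N+1),
                cA r * ((if r ≤ M then hp (M-r) else 0) * hm (N-r))) := by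
          have stepA : (N:ℚ) • (hm N * hp M)
              = ∑ k ∈ range (N+1), ∑ r ∈ range (N-k+1),
                  ((if k = 0 then 0 else
                      cA r * ((if r ≤ M then hp (M-r) else 0) * (Pm k * hm (N-k-r))))
                    + (if k = 0 then 0 else
                      cA r * (A k * ((if r + k ≤ M then hp (M-(r+k)) else 0) * hm (N-k-r))))) := by
            rw [← smul_mul_assoc, K1m N, Finset.sum_mul]
            refine Finset.sum_congr rfl fun k hk => ?_
            rcases Nat.eq_zero_or_pos k with rfl | hk1
            · simp
            · have hk0 : ¬ (k = 0) := by omega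
              rw [if_neg hk0, mul_assoc, IH (N-k) (by omega) M, Finset.mul_sum]
              refine Finset.sum_congr rfl fun r hr => ?_
              rw [if_neg hk0, if_neg hk0]
              have hstep : Pm k * ((if r ≤ M then hp (M-r) else 0) * hm (N-k-r))
                  = (if r ≤ M then hp (M-r) else 0) * (Pm k * hm (N-k-r))
                    + A k * ((if r + k ≤ M then hp (M-(r+k)) else 0) * hm (N-k-r)) := by
                rw [← mul_assoc, K2e k hk1 M r, add_mul, mul_assoc, mul_assoc]
              rw [← mul_assoc, ← ccomm r (Pm k), mul_assoc, hstep, mul_add]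
          rw [stepA]
          simp only [Finset.sum_add_distrib]
          have part1 : ∑ k ∈ range (N+1), ∑ r ∈ range (N-k+1),
              (if k = 0 then 0 else
                cA r * ((if r ≤ M then hp (M-r) else 0) * (Pm k * hm (N-k-r))))
              = ∑ r ∈ range (N+1), ((N-r : ℕ):ℚ)
                  • (cA r * ((if r ≤ M then hp (M-r) else 0) * hm (N-r))) := by
            rw [tri_comm N (fun k r => if k = 0 then 0 else
              cA r * ((if r ≤ M then hp (M-r) else 0) * (Pm k * hm (N-k-r))))]
            refine Finset.sum_congr rfl fun r hr => ?_
            rw [mem_range] at hr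
            have inner : ∀ k ∈ range (N-r+1),
                (if k = 0 then 0 else
                  cA r * ((if r ≤ M then hp (M-r) else 0) * (Pm k * hm (N-k-r))))
                  = cA r * ((if r ≤ M then hp (M-r) else 0)
                      * (if k = 0 then 0 else Pm k * hm ((N-r)-k))) := by
              intro k hk
              rcases Nat.eq_zero_or_pos k with rfl | hk1
              · simp
              · have hk0 : ¬ (k = 0) := by omega
                rw [if_neg hk0, if_neg hk0]
                have e : N - k - r = N - r - k := by omega
                rw [e]
            rw [Finset.sum_congr rfl inner, ← Finset.mul_sum, ← Finset.mul_sum, ← K1m (N-r),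
              mul_smul_comm, mul_smul_comm]
          have part2 : ∑ k ∈ range (N+1), ∑ r ∈ range (N-k+1),
              (if k = 0 then 0 else
                cA r * (A k * ((if r + k ≤ M then hp (M-(r+k)) else 0) * hm (N-k-r))))
              = ∑ s ∈ range (N+1), (s:ℚ)
                  • (cA s * ((if s ≤ M then hp (M-s) else 0) * hm (N-s))) := by
            rw [tri_sum N (fun k r => if k = 0 then 0 else
              cA r * (A k * ((if r + k ≤ M then hp (M-(r+k)) else 0) * hm (N-k-r))))]
            refine Finset.sum_congr rfl fun s hs => ?_
            rw [mem_range] at hs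
            have inner : ∀ k ∈ range (s+1),
                (if k = 0 then 0 else
                  cA (s-k) * (A k * ((if (s-k) + k ≤ M then hp (M-((s-k)+k)) else 0)
                    * hm (N-k-(s-k)))))
                  = (if k = 0 then (0:H) else algebraMap (RatFunc ℚ) H (b k * c (s-k)))
                      * ((if s ≤ M then hp (M-s) else 0) * hm (N-s)) := by
              intro k hk
              rw [mem_range] at hk
              rcases Nat.eq_zero_or_pos k with rfl | hk1
              · simp
              · have hk0 : ¬ (k = 0) := by omega
                rw [if_neg hk0, if_neg hk0]
                have e1 : s - k + k = s := by omega
                have e2 : N - k - (s-k) = N - s := by omega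
                have e3 : cA (s-k) * A k = algebraMap (RatFunc ℚ) H (b k * c (s-k)) := by
                  show algebraMap (RatFunc ℚ) H (c (s-k)) * algebraMap (RatFunc ℚ) H (b k) = _
                  rw [← map_mul, mul_comm]
                rw [e1, e2, ← mul_assoc, e3]
            rw [Finset.sum_congr rfl inner, ← Finset.sum_mul]
            have hmap : (∑ k ∈ range (s+1),
                (if k = 0 then (0:H) else algebraMap (RatFunc ℚ) H (b k * c (s-k))))
                = algebraMap (RatFunc ℚ) H ((s : RatFunc ℚ) * c s) := by
              rw [← bcrec s, map_sum]
              refine Finset.sum_congr rfl fun k hk => ?_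
              rcases Nat.eq_zero_or_pos k with rfl | hk1
              · simp
              · have hk0 : ¬ (k = 0) := by omega
                rw [if_neg hk0, if_neg hk0]
            rw [hmap, natsmul]
          rw [part1, part2, ← Finset.sum_add_distrib, Finset.smul_sum]
          refine Finset.sum_congr rfl fun r hr => ?_
          rw [mem_range] at hr
          rw [← add_smul]
          congr 1
          rw [Nat.cast_sub (by omega : r ≤ N)]
          ring
        have hdiv := congrArg (fun y => ((N:ℕ):ℚ)⁻¹ • y) key
        simpa [smul_smul, inv_mul_cancel₀ hNz] using hdiv
  rw [main n m]
  rcases le_or_gt n m with h | h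
  · rw [min_eq_right h]
    refine Finset.sum_congr rfl fun r hr => ?_
    rw [mem_range] at hr
    rw [if_pos (by omega)]
  · rw [min_eq_left (le_of_lt h)]
    have hvan : ∀ r ∈ range (n+1), r ∉ range (m+1) →
        cA r * ((if r ≤ m then hp (m - r) else 0) * hm (n - r)) = 0 := by
      intro r h1 h2
      rw [mem_range] at h2
      rw [if_neg (by omega), zero_mul, mul_zero]
    rw [← Finset.sum_subset (Finset.range_subset_range.mpr (by omega : m+1 ≤ n+1)) hvan]
    refine Finset.sum_congr rfl fun r hr => ?_
    rw [mem_range] at hr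
    rw [if_pos (by omega)]
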